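/- Let N be a positive integer, let g be an N-density-like arithmetic function such that ∑_{d=1}^∞ (1 − g(d))/d converges, set f(n) = ∏_{d|n} g(d), and let {L_t}_{t≥1} be a sequence of positive integers with L_t dividing L_{t+1} for every t ≥ 1. Then the sequence A_t = (1/L_t) ∑_{r | L_t} f(r) φ(L_t / r) is nonincreasing in t, i.e. A_{t+1} ≤ A_t for all t ≥ 1. -/

import Mathlib

open Filter Finset

private lemma f_anti {g : ℕ → ℝ}
    (hg_pos : ∀ n : ℕ, 1 ≤ n → 0 < g n)
    (hg_le : ∀ n : ℕ, 1 ≤ n → g n ≤ 1)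
    {f : ℕ → ℝ} (hf : ∀ n : ℕ, f n = ∏ d ∈ n.divisors, g d)
    {a b : ℕ} (hab : a ∣ b) (hb : 0 < b) : f b ≤ f a := by
  have hsub : a.divisors ⊆ b.divisors := Nat.divisors_subset_of_dvd hb.ne' hab
  have key : (∏ d ∈ b.divisors \ a.divisors, g d) * ∏ d ∈ a.divisors, g d
      = ∏ d ∈ b.divisors, g d := Finset.prod_sdiff hsub
  rw [hf, hf, ← key]
  have h1 : (∏ d ∈ b.divisors \ a.divisors, g d) ≤ 1 := by
    apply Finset.prod_le_one
    · intro d hd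
      exact le_of_lt (hg_pos d (Nat.pos_of_mem_divisors (Finset.mem_sdiff.1 hd).1))
    · intro d hd
      exact hg_le d (Nat.pos_of_mem_divisors (Finset.mem_sdiff.1 hd).1)
  have h2 : 0 ≤ ∏ d ∈ a.divisors, g d :=
    Finset.prod_nonneg fun d hd => le_of_lt (hg_pos d (Nat.pos_of_mem_divisors hd))
  calc (∏ d ∈ b.divisors \ a.divisors, g d) * ∏ d ∈ a.divisors, g d
      ≤ 1 * ∏ d ∈ a.divisors, g d := mul_le_mul_of_nonneg_right h1 h2
    _ = ∏ d ∈ a.divisors, g d := one_mul _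

/-- Rewrite the divisor sum as a sum over residues. -/
private lemma sum_eq (f : ℕ → ℝ) (L : ℕ) (hL : 0 < L) :
    (∑ r ∈ L.divisors, f r * (Nat.totient (L / r) : ℝ))
      = ∑ k ∈ Finset.range L, f (Nat.gcd L k) := by
  rw [← Finset.sum_fiberwise_of_maps_to
    (fun k (_ : k ∈ Finset.range L) => Nat.mem_divisors.2 ⟨Nat.gcd_dvd_left L k, hL.ne'⟩)
    (fun k => f (Nat.gcd L k))]
  refine Finset.sum_congr rfl fun r hr => ?_
  rw [Nat.totient_div_of_dvd (Nat.dvd_of_mem_divisors hr)]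
  rw [show (∑ k ∈ Finset.filter (fun k => Nat.gcd L k = r) (Finset.range L), f (Nat.gcd L k))
      = ∑ _k ∈ Finset.filter (fun k => Nat.gcd L k = r) (Finset.range L), f r from
    Finset.sum_congr rfl fun k hk => congrArg f (Finset.mem_filter.1 hk).2]
  rw [Finset.sum_const, nsmul_eq_mul, mul_comm]

private lemma periodic_sum (h : ℕ → ℝ) (L : ℕ) (hper : ∀ k, h (k + L) = h k) :
    ∀ m : ℕ, ∑ k ∈ Finset.range (m * L), h k = m * ∑ k ∈ Finset.range L, h k := by
  have hshift : ∀ n i, h (n * L + i) = h i := by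
    intro n i
    induction n with
    | zero => simp
    | succ n ih => rw [Nat.succ_mul, add_right_comm, hper, ih]
  intro m
  induction m with
  | zero => simp
  | succ m ih =>
    rw [Nat.succ_mul, Finset.sum_range_add, ih]
    rw [Finset.sum_congr rfl fun i _ => hshift m i]
    push_cast
    ring

/-- **Monotonicity lemma.** With the notation of the main theorem (only divisibility of
the sequence `L` is needed), the sequence `A t = (1/L t) ∑_{r ∣ L t} f r · φ(L t / r)`
is nonincreasing. -/
theorem A_antitone
    (N : ℕ) (hN : 1 ≤ N) (g : ℕ → ℝ)
    (hg_pos : ∀ n : ℕ, 1 ≤ n → 0 < g n)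
    (hg_le : ∀ n : ℕ, 1 ≤ n → g n ≤ 1)
    (hg_N : ∀ n : ℕ, 1 ≤ n → 1 < Nat.gcd n N → g n = 1)
    (hsum : Summable fun d : ℕ => (1 - g d) / d)
    (f : ℕ → ℝ) (hf : ∀ n : ℕ, f n = ∏ d ∈ n.divisors, g d)
    (L : ℕ → ℕ)
    (hLpos : ∀ t : ℕ, 1 ≤ t → 0 < L t)
    (hLdvd : ∀ t : ℕ, 1 ≤ t → L t ∣ L (t + 1))
    (A : ℕ → ℝ)
    (hA : ∀ t : ℕ, A t =
      (∑ r ∈ (L t).divisors, f r * (Nat.totient (L t / r) : ℝ)) / (L t : ℝ)) :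
    ∀ t : ℕ, 1 ≤ t → A (t + 1) ≤ A t := by
  intro t ht
  set l := L t with hl
  set M := L (t + 1) with hM
  have hl0 : 0 < l := hLpos t ht
  have hM0 : 0 < M := hLpos (t + 1) (le_trans ht (Nat.le_succ t))
  obtain ⟨m, hm⟩ := hLdvd t ht
  have hm0 : 0 < m := by
    rcases Nat.eq_zero_or_pos m with h | h
    · simp [h] at hm; omega
    · exact h
  rw [hA, hA, sum_eq f l hl0, sum_eq f M hM0]
  -- termwise bound for the M-sum
  have step1 : ∑ k ∈ Finset.range M, f (Nat.gcd M k)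
      ≤ ∑ k ∈ Finset.range M, f (Nat.gcd l k) := by
    refine Finset.sum_le_sum fun k _ => ?_
    refine f_anti hg_pos hg_le hf ?_ (Nat.gcd_pos_of_pos_left k hM0)
    exact Nat.dvd_gcd ((Nat.gcd_dvd_left l k).trans ⟨m, hm⟩) (Nat.gcd_dvd_right l k)
  have hm' : M = l * m := hm
  have step2 : ∑ k ∈ Finset.range M, f (Nat.gcd l k)
      = m * ∑ k ∈ Finset.range l, f (Nat.gcd l k) := by
    rw [show M = m * l from by rw [hm']; ring]
    exact periodic_sum (fun k => f (Nat.gcd l k)) l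
      (fun k => by simp [Nat.gcd_add_self_right]) m
  have hMr : (M : ℝ) = m * l := by rw [hm']; push_cast; ring
  rw [div_le_div_iff₀ (by exact_mod_cast hM0) (by exact_mod_cast hl0)]
  calc (∑ k ∈ Finset.range M, f (Nat.gcd M k)) * (l : ℝ)
      ≤ (m * ∑ k ∈ Finset.range l, f (Nat.gcd l k)) * l := by
        refine mul_le_mul_of_nonneg_right ?_ (by positivity)
        rw [← step2]; exact step1
    _ = (∑ k ∈ Finset.range l, f (Nat.gcd l k)) * (M : ℝ) := by rw [hMr]; ring
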